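/- Let e, s : (0,∞) × (0,∞) → ℝ be twice continuously differentiable and P : (0,∞) × (0,∞) → ℝ be continuously differentiable, satisfying the Gibbs relation ∂_θ e = θ ∂_θ s and ∂_ρ e = θ ∂_ρ s + P/ρ² and the thermodynamic stability conditions ∂_ρ P(ρ,θ) > 0 and ∂_θ e(ρ,θ) > 0 for all ρ, θ > 0. Then for every compact set K = [ρ₀′,ρ₁′] × [θ₀′,θ₁′] ⊂ (0,∞)² there exists c > 0 such that for all (ρ,θ) ∈ K and (ρ′,θ′) ∈ K: |ρ·(s(ρ,θ) − s(ρ′,θ′)) − ρ′·(∂_ρ s(ρ′,θ′)·(ρ − ρ′) + ∂_θ s(ρ′,θ′)·(θ − θ′))| ≤ c·Γ(ρ,θ|ρ′,θ′). -/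

import Mathlib

open Set

/-- If `v` has derivative `v'` on `[A,B]`, nonneg right of `c` and nonpos left of `c`,
then `v c` is a minimum on `[A,B]`. -/
lemma aux_min (v v' : ℝ → ℝ) (A B c : ℝ) (hc : c ∈ Icc A B)
    (hv : ∀ t ∈ Icc A B, HasDerivAt v (v' t) t)
    (hpos : ∀ t ∈ Icc A B, c ≤ t → 0 ≤ v' t)
    (hneg : ∀ t ∈ Icc A B, t ≤ c → v' t ≤ 0) :
    ∀ b ∈ Icc A B, v c ≤ v b := by
  intro b hb
  have hmem : ∀ t ∈ Icc c B, t ∈ Icc A B := fun t ht => ⟨le_trans hc.1 ht.1, ht.2⟩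
  have hmem' : ∀ t ∈ Icc A c, t ∈ Icc A B := fun t ht => ⟨ht.1, le_trans ht.2 hc.2⟩
  rcases le_total c b with hcb | hbc
  · have mono : MonotoneOn v (Icc c B) := by
      apply monotoneOn_of_deriv_nonneg (convex_Icc c B)
      · exact fun t ht => (hv t (hmem t ht)).continuousAt.continuousWithinAt
      · intro t ht
        rw [interior_Icc] at ht
        exact ((hv t (hmem t (Ioo_subset_Icc_self ht))).differentiableAt).differentiableWithinAt
      · intro t ht
        rw [interior_Icc] at ht
        have h1 := hmem t (Ioo_subset_Icc_self ht)
        rw [(hv t h1).deriv]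
        exact hpos t h1 ht.1.le
    exact mono ⟨le_refl c, hc.2⟩ ⟨hcb, hb.2⟩ hcb
  · have anti : AntitoneOn v (Icc A c) := by
      apply antitoneOn_of_deriv_nonpos (convex_Icc A c)
      · exact fun t ht => (hv t (hmem' t ht)).continuousAt.continuousWithinAt
      · intro t ht
        rw [interior_Icc] at ht
        exact ((hv t (hmem' t (Ioo_subset_Icc_self ht))).differentiableAt).differentiableWithinAt
      · intro t ht
        rw [interior_Icc] at ht
        have h1 := hmem' t (Ioo_subset_Icc_self ht)
        rw [(hv t h1).deriv]
        exact hneg t h1 ht.2.le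
    exact anti ⟨hb.1, hbc⟩ ⟨hc.1, le_refl c⟩ hbc

/-- Uniform second-order Taylor remainder bound for a `C²` function on a compact convex set. -/
lemma taylor2_bound {F : ℝ × ℝ → ℝ} {U K : Set (ℝ × ℝ)} (hU : IsOpen U)
    (hF : ContDiffOn ℝ 2 F U) (hK : IsCompact K) (hKc : Convex ℝ K) (hKU : K ⊆ U) :
    ∃ M : ℝ, 0 < M ∧ ∀ x ∈ K, ∀ y ∈ K,
      |F y - F x - fderiv ℝ F x (y - x)| ≤ M * ‖y - x‖ ^ 2 := by
  have hFd : ∀ z ∈ U, DifferentiableAt ℝ F z := fun z hz =>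
    (hF.differentiableOn (by norm_num)).differentiableAt (hU.mem_nhds hz)
  have hD1 : ContDiffOn ℝ 1 (fderiv ℝ F) U := hF.fderiv_of_isOpen hU (by norm_num)
  have hDd : ∀ z ∈ U, DifferentiableAt ℝ (fderiv ℝ F) z := fun z hz =>
    (hD1.differentiableOn (by norm_num)).differentiableAt (hU.mem_nhds hz)
  obtain ⟨M0, hM0⟩ := hK.exists_bound_of_continuousOn
    ((hD1.continuousOn_fderiv_of_isOpen hU (by norm_num)).mono hKU)
  set M := max M0 1 with hMdef
  have hM1 : (1 : ℝ) ≤ M := le_max_right _ _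
  have hMpos : 0 < M := lt_of_lt_of_le one_pos hM1
  refine ⟨M, hMpos, ?_⟩
  intro x hx y hy
  have hLip : ∀ z ∈ K, ‖fderiv ℝ F z - fderiv ℝ F x‖ ≤ M * ‖z - x‖ := by
    intro z hz
    exact hKc.norm_image_sub_le_of_norm_fderiv_le
      (fun w hw => hDd w (hKU hw))
      (fun w hw => le_trans (hM0 w hw) (le_max_left _ _)) hx hz
  set G := fun z : ℝ × ℝ => F z - fderiv ℝ F x z with hGdef
  have hGd : ∀ z ∈ U, DifferentiableAt ℝ G z := fun z hz =>
    (hFd z hz).sub (fderiv ℝ F x).differentiableAt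
  have hGF : ∀ z ∈ U, fderiv ℝ G z = fderiv ℝ F z - fderiv ℝ F x := fun z hz =>
    ((hFd z hz).hasFDerivAt.sub (fderiv ℝ F x).hasFDerivAt).fderiv
  have hseg : segment ℝ x y ⊆ K := hKc.segment_subset hx hy
  have hsegnorm : ∀ z ∈ segment ℝ x y, ‖z - x‖ ≤ ‖y - x‖ := by
    intro z hz
    rw [segment_eq_image'] at hz
    obtain ⟨t, ht, rfl⟩ := hz
    rw [add_sub_cancel_left, norm_smul, Real.norm_eq_abs, abs_of_nonneg ht.1]
    nlinarith [norm_nonneg (y - x), ht.2]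
  have key : ‖G y - G x‖ ≤ M * ‖y - x‖ * ‖y - x‖ := by
    apply Convex.norm_image_sub_le_of_norm_fderiv_le
      (fun z hz => hGd z (hKU (hseg hz)))
      (fun z hz => ?_) (convex_segment x y) (left_mem_segment ℝ x y) (right_mem_segment ℝ x y)
    rw [hGF z (hKU (hseg hz))]
    exact le_trans (hLip z (hseg hz))
      (mul_le_mul_of_nonneg_left (hsegnorm z hz) hMpos.le)
  have hGyx : G y - G x = F y - F x - fderiv ℝ F x (y - x) := by
    simp only [hGdef, map_sub]
    ring
  rw [hGyx] at key
  calc |F y - F x - fderiv ℝ F x (y - x)| ≤ M * ‖y - x‖ * ‖y - x‖ := key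
    _ = M * ‖y - x‖ ^ 2 := by ring


/-- Ballistic free energy `H_C(ρ,θ) = ρ e(ρ,θ) − C ρ s(ρ,θ)`. -/
noncomputable def ballisticH (e s : ℝ × ℝ → ℝ) (C ρ θ : ℝ) : ℝ :=
  ρ * e (ρ, θ) - C * (ρ * s (ρ, θ))

/-- Relative entropy
`Γ(ρ,θ|ρ′,θ′) = H_{θ′}(ρ,θ) − ∂_ρ H_{θ′}(ρ′,θ′)·(ρ − ρ′) − H_{θ′}(ρ′,θ′)`. -/
noncomputable def relEntropy (e s : ℝ × ℝ → ℝ) (ρ θ ρ' θ' : ℝ) : ℝ :=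
  ballisticH e s θ' ρ θ -
    deriv (fun r : ℝ => ballisticH e s θ' r θ') ρ' * (ρ - ρ') -
    ballisticH e s θ' ρ' θ'

set_option maxHeartbeats 2000000 in
/-- under the Gibbs relation and thermodynamic stability, on every
compact set `K = [ρ₀′,ρ₁′] × [θ₀′,θ₁′] ⊂ (0,∞)²` there is `c > 0` with
`|ρ(s(ρ,θ) − s(ρ′,θ′)) − ρ′(∂_ρ s(ρ′,θ′)(ρ − ρ′) + ∂_θ s(ρ′,θ′)(θ − θ′))| ≤ c·Γ(ρ,θ|ρ′,θ′)`
for all `(ρ,θ), (ρ′,θ′) ∈ K`. -/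
theorem entropy_taylor_remainder_relEntropy_bound (e s P : ℝ × ℝ → ℝ)
    (he : ContDiffOn ℝ 2 e (Set.Ioi (0 : ℝ) ×ˢ Set.Ioi (0 : ℝ)))
    (hs : ContDiffOn ℝ 2 s (Set.Ioi (0 : ℝ) ×ˢ Set.Ioi (0 : ℝ)))
    (hP : ContDiffOn ℝ 1 P (Set.Ioi (0 : ℝ) ×ˢ Set.Ioi (0 : ℝ)))
    (gibbs1 : ∀ ρ θ : ℝ, 0 < ρ → 0 < θ →
      fderiv ℝ e (ρ, θ) (0, 1) = θ * fderiv ℝ s (ρ, θ) (0, 1))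
    (gibbs2 : ∀ ρ θ : ℝ, 0 < ρ → 0 < θ →
      fderiv ℝ e (ρ, θ) (1, 0) = θ * fderiv ℝ s (ρ, θ) (1, 0) + P (ρ, θ) / ρ ^ 2)
    (hstabP : ∀ ρ θ : ℝ, 0 < ρ → 0 < θ → 0 < fderiv ℝ P (ρ, θ) (1, 0))
    (hstabe : ∀ ρ θ : ℝ, 0 < ρ → 0 < θ → 0 < fderiv ℝ e (ρ, θ) (0, 1))
    (ρ₀' ρ₁' θ₀' θ₁' : ℝ) (hρ₀ : 0 < ρ₀') (hρ₁ : ρ₀' ≤ ρ₁') (hθ₀ : 0 < θ₀') (hθ₁ : θ₀' ≤ θ₁') :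
    ∃ c : ℝ, 0 < c ∧
      ∀ ρ θ ρ' θ' : ℝ, ρ ∈ Set.Icc ρ₀' ρ₁' → θ ∈ Set.Icc θ₀' θ₁' →
        ρ' ∈ Set.Icc ρ₀' ρ₁' → θ' ∈ Set.Icc θ₀' θ₁' →
        |ρ * (s (ρ, θ) - s (ρ', θ')) -
            ρ' * (fderiv ℝ s (ρ', θ') (1, 0) * (ρ - ρ') +
              fderiv ℝ s (ρ', θ') (0, 1) * (θ - θ'))| ≤
          c * relEntropy e s ρ θ ρ' θ' := by
  set U : Set (ℝ × ℝ) := Set.Ioi (0 : ℝ) ×ˢ Set.Ioi (0 : ℝ) with hUdef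
  have hUopen : IsOpen U := isOpen_Ioi.prod isOpen_Ioi
  set K : Set (ℝ × ℝ) := Set.Icc ρ₀' ρ₁' ×ˢ Set.Icc θ₀' θ₁' with hKdef
  have hKU : K ⊆ U := by
    rintro ⟨a, b⟩ ⟨ha, hb⟩
    exact ⟨lt_of_lt_of_le hρ₀ ha.1, lt_of_lt_of_le hθ₀ hb.1⟩
  have hKcomp : IsCompact K := isCompact_Icc.prod isCompact_Icc
  have hKconv : Convex ℝ K := (convex_Icc _ _).prod (convex_Icc _ _)
  have hKne : K.Nonempty := ⟨(ρ₀', θ₀'), ⟨⟨le_refl _, hρ₁⟩, ⟨le_refl _, hθ₁⟩⟩⟩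
  have hede : ∀ x ∈ U, DifferentiableAt ℝ e x := fun x hx =>
    (he.differentiableOn (by norm_num)).differentiableAt (hUopen.mem_nhds hx)
  have hsde : ∀ x ∈ U, DifferentiableAt ℝ s x := fun x hx =>
    (hs.differentiableOn (by norm_num)).differentiableAt (hUopen.mem_nhds hx)
  have hPde : ∀ x ∈ U, DifferentiableAt ℝ P x := fun x hx =>
    (hP.differentiableOn (by norm_num)).differentiableAt (hUopen.mem_nhds hx)
  have hmemU : ∀ r t : ℝ, 0 < r → 0 < t → ((r, t) : ℝ × ℝ) ∈ U := fun r t hr ht => ⟨hr, ht⟩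
  -- directional derivative lemmas
  have keyρ : ∀ (F : ℝ × ℝ → ℝ), (∀ x ∈ U, DifferentiableAt ℝ F x) → ∀ r t : ℝ, 0 < r → 0 < t →
      HasDerivAt (fun r' => F (r', t)) (fderiv ℝ F (r, t) (1, 0)) r := by
    intro F hFd r t hr ht
    have hcurve : HasDerivAt (fun r' : ℝ => ((r' : ℝ), t)) ((1 : ℝ), (0 : ℝ)) r :=
      (hasDerivAt_id r).prodMk (hasDerivAt_const r t)
    exact (hFd (r, t) (hmemU r t hr ht)).hasFDerivAt.comp_hasDerivAt r hcurve
  have keyθ : ∀ (F : ℝ × ℝ → ℝ), (∀ x ∈ U, DifferentiableAt ℝ F x) → ∀ r t : ℝ, 0 < r → 0 < t →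
      HasDerivAt (fun t' => F (r, t')) (fderiv ℝ F (r, t) (0, 1)) t := by
    intro F hFd r t hr ht
    have hcurve : HasDerivAt (fun t' : ℝ => ((r : ℝ), t')) ((0 : ℝ), (1 : ℝ)) t :=
      (hasDerivAt_const t r).prodMk (hasDerivAt_id t)
    exact (hFd (r, t) (hmemU r t hr ht)).hasFDerivAt.comp_hasDerivAt t hcurve
  -- derivative of h(r) = ballisticH e s θ0 r θ0
  have hd_h : ∀ θ0 r : ℝ, 0 < θ0 → 0 < r →
      HasDerivAt (fun r' => ballisticH e s θ0 r' θ0)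
        (e (r, θ0) - θ0 * s (r, θ0) + P (r, θ0) / r) r := by
    intro θ0 r hθ0 hr
    have h1 : HasDerivAt (fun r' => r' * e (r', θ0))
        (1 * e (r, θ0) + r * fderiv ℝ e (r, θ0) (1, 0)) r :=
      (hasDerivAt_id r).mul (keyρ e hede r θ0 hr hθ0)
    have h2 : HasDerivAt (fun r' => r' * s (r', θ0))
        (1 * s (r, θ0) + r * fderiv ℝ s (r, θ0) (1, 0)) r :=
      (hasDerivAt_id r).mul (keyρ s hsde r θ0 hr hθ0)
    have h3 := h1.sub (h2.const_mul θ0)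
    have heq : 1 * e (r, θ0) + r * fderiv ℝ e (r, θ0) (1, 0) -
        θ0 * (1 * s (r, θ0) + r * fderiv ℝ s (r, θ0) (1, 0)) =
        e (r, θ0) - θ0 * s (r, θ0) + P (r, θ0) / r := by
      rw [gibbs2 r θ0 hr hθ0]
      field_simp
      ring
    rw [heq] at h3
    exact h3
  -- derivative of φ(r) = e(r,θ0) - θ0 s(r,θ0) + P(r,θ0)/r
  have hd_φ : ∀ θ0 r : ℝ, 0 < θ0 → 0 < r →
      HasDerivAt (fun r' => e (r', θ0) - θ0 * s (r', θ0) + P (r', θ0) / r')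
        (fderiv ℝ P (r, θ0) (1, 0) / r) r := by
    intro θ0 r hθ0 hr
    have h1 := keyρ e hede r θ0 hr hθ0
    have h2 := (keyρ s hsde r θ0 hr hθ0).const_mul θ0
    have h3 := (keyρ P hPde r θ0 hr hθ0).div (hasDerivAt_id r) (ne_of_gt hr)
    have h4 := (h1.sub h2).add h3
    have heq : fderiv ℝ e (r, θ0) (1, 0) - θ0 * fderiv ℝ s (r, θ0) (1, 0) +
        (fderiv ℝ P (r, θ0) (1, 0) * r - P (r, θ0) * 1) / r ^ 2 =
        fderiv ℝ P (r, θ0) (1, 0) / r := by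
      rw [gibbs2 r θ0 hr hθ0]
      field_simp
      ring
    simp only [id_eq] at h4
    rw [heq] at h4
    exact h4
  -- derivative of g(t) = ballisticH e s θ0 ρ0 t
  have hd_g : ∀ θ0 ρ0 t : ℝ, 0 < θ0 → 0 < ρ0 → 0 < t →
      HasDerivAt (fun t' => ballisticH e s θ0 ρ0 t')
        (ρ0 * fderiv ℝ e (ρ0, t) (0, 1) / t * (t - θ0)) t := by
    intro θ0 ρ0 t hθ0 hρ0 ht
    have h1 := (keyθ e hede ρ0 t hρ0 ht).const_mul ρ0
    have h2 := ((keyθ s hsde ρ0 t hρ0 ht).const_mul ρ0).const_mul θ0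
    have h3 := h1.sub h2
    have hst : fderiv ℝ s (ρ0, t) (0, 1) = fderiv ℝ e (ρ0, t) (0, 1) / t := by
      rw [gibbs1 ρ0 t hρ0 ht]
      field_simp
    have heq : ρ0 * fderiv ℝ e (ρ0, t) (0, 1) - θ0 * (ρ0 * fderiv ℝ s (ρ0, t) (0, 1)) =
        ρ0 * fderiv ℝ e (ρ0, t) (0, 1) / t * (t - θ0) := by
      rw [hst]
      field_simp
    rw [heq] at h3
    exact h3
  -- positive minima on K
  have hfe_cont : ContinuousOn (fun x : ℝ × ℝ => fderiv ℝ e x (0, 1)) U :=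
    (he.continuousOn_fderiv_of_isOpen hUopen (by norm_num)).clm_apply continuousOn_const
  have hfP_cont : ContinuousOn (fun x : ℝ × ℝ => fderiv ℝ P x (1, 0)) U :=
    (hP.continuousOn_fderiv_of_isOpen hUopen (by norm_num)).clm_apply continuousOn_const
  have hxpos : ∀ x ∈ K, 0 < x.1 ∧ 0 < x.2 := by
    intro x hx
    exact ⟨(hKU hx).1, (hKU hx).2⟩
  have hq1cont : ContinuousOn (fun x : ℝ × ℝ => x.1 * fderiv ℝ e x (0, 1) / x.2) K :=
    (continuous_fst.continuousOn.mul (hfe_cont.mono hKU)).div continuous_snd.continuousOn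
      (fun x hx => ne_of_gt (hxpos x hx).2)
  have hq2cont : ContinuousOn (fun x : ℝ × ℝ => fderiv ℝ P x (1, 0) / x.1) K :=
    (hfP_cont.mono hKU).div continuous_fst.continuousOn (fun x hx => ne_of_gt (hxpos x hx).1)
  obtain ⟨z₁, hz₁K, hz₁min⟩ := hKcomp.exists_isMinOn hKne hq1cont
  obtain ⟨z₂, hz₂K, hz₂min⟩ := hKcomp.exists_isMinOn hKne hq2cont
  set m₁ : ℝ := z₁.1 * fderiv ℝ e z₁ (0, 1) / z₁.2 with hm₁def
  set m₂ : ℝ := fderiv ℝ P z₂ (1, 0) / z₂.1 with hm₂def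
  have hm₁pos : 0 < m₁ := by
    have h1 := (hxpos z₁ hz₁K).1
    have h2 := (hxpos z₁ hz₁K).2
    have h3 := hstabe z₁.1 z₁.2 h1 h2
    rw [hm₁def]
    positivity
  have hm₂pos : 0 < m₂ := by
    have h1 := (hxpos z₂ hz₂K).1
    have h2 := (hxpos z₂ hz₂K).2
    have h3 := hstabP z₂.1 z₂.2 h1 h2
    rw [hm₂def]
    positivity
  have hm₁le : ∀ x ∈ K, m₁ ≤ x.1 * fderiv ℝ e x (0, 1) / x.2 := fun x hx => hz₁min hx
  have hm₂le : ∀ x ∈ K, m₂ ≤ fderiv ℝ P x (1, 0) / x.1 := fun x hx => hz₂min hx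
  -- Taylor remainder bound for F(x) = x.1 * s x
  have hFC2 : ContDiffOn ℝ 2 (fun x : ℝ × ℝ => x.1 * s x) U :=
    contDiff_fst.contDiffOn.mul hs
  obtain ⟨M, hMpos, hMbound⟩ := taylor2_bound hUopen hFC2 hKcomp hKconv hKU
  set m : ℝ := min m₁ m₂ with hmdef
  have hmpos : 0 < m := lt_min hm₁pos hm₂pos
  refine ⟨2 * M / m, by positivity, ?_⟩
  intro ρ θ ρ' θ' hρmem hθmem hρ'mem hθ'mem
  have hρpos : 0 < ρ := lt_of_lt_of_le hρ₀ hρmem.1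
  have hθpos : 0 < θ := lt_of_lt_of_le hθ₀ hθmem.1
  have hρ'pos : 0 < ρ' := lt_of_lt_of_le hρ₀ hρ'mem.1
  have hθ'pos : 0 < θ' := lt_of_lt_of_le hθ₀ hθ'mem.1
  have hxK : ((ρ, θ) : ℝ × ℝ) ∈ K := ⟨hρmem, hθmem⟩
  have hx'K : ((ρ', θ') : ℝ × ℝ) ∈ K := ⟨hρ'mem, hθ'mem⟩
  set Q : ℝ := (ρ - ρ') ^ 2 + (θ - θ') ^ 2 with hQdef
  -- Step 1 : |LHS| ≤ M * Q
  have step1 : |ρ * (s (ρ, θ) - s (ρ', θ')) -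
      ρ' * (fderiv ℝ s (ρ', θ') (1, 0) * (ρ - ρ') +
        fderiv ℝ s (ρ', θ') (0, 1) * (θ - θ'))| ≤ M * Q := by
    have hFder : HasFDerivAt (fun x : ℝ × ℝ => x.1 * s x)
        ((ρ', θ').1 • fderiv ℝ s (ρ', θ') + s (ρ', θ') • ContinuousLinearMap.fst ℝ ℝ ℝ)
        (ρ', θ') :=
      hasFDerivAt_fst.mul ((hsde (ρ', θ') (hKU hx'K)).hasFDerivAt)
    have hbound := hMbound (ρ', θ') hx'K (ρ, θ) hxK
    rw [hFder.fderiv] at hbound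
    have hvsub : ((ρ, θ) : ℝ × ℝ) - (ρ', θ') = (ρ - ρ', θ - θ') := rfl
    have hvdec : ((ρ - ρ', θ - θ') : ℝ × ℝ) =
        (ρ - ρ') • ((1 : ℝ), (0 : ℝ)) + (θ - θ') • ((0 : ℝ), (1 : ℝ)) := by
      simp [Prod.ext_iff]
    have hsapp : fderiv ℝ s (ρ', θ') ((ρ - ρ', θ - θ') : ℝ × ℝ) =
        (ρ - ρ') * fderiv ℝ s (ρ', θ') (1, 0) + (θ - θ') * fderiv ℝ s (ρ', θ') (0, 1) := by
      rw [hvdec, map_add, map_smul, map_smul, smul_eq_mul, smul_eq_mul]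
    have happ : ((ρ', θ').1 • fderiv ℝ s (ρ', θ') + s (ρ', θ') • ContinuousLinearMap.fst ℝ ℝ ℝ)
          (((ρ, θ) : ℝ × ℝ) - (ρ', θ')) =
        ρ' * ((ρ - ρ') * fderiv ℝ s (ρ', θ') (1, 0) + (θ - θ') * fderiv ℝ s (ρ', θ') (0, 1)) +
          s (ρ', θ') * (ρ - ρ') := by
      rw [hvsub, ContinuousLinearMap.add_apply, ContinuousLinearMap.smul_apply,
        ContinuousLinearMap.smul_apply, hsapp]
      have hfst : (ContinuousLinearMap.fst ℝ ℝ ℝ) ((ρ - ρ', θ - θ') : ℝ × ℝ) = ρ - ρ' := rfl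
      rw [hfst, smul_eq_mul, smul_eq_mul]
    rw [happ] at hbound
    have hnorm : ‖((ρ, θ) : ℝ × ℝ) - (ρ', θ')‖ ^ 2 ≤ Q := by
      rw [hvsub, Prod.norm_def]
      rcases max_cases ‖ρ - ρ'‖ ‖θ - θ'‖ with ⟨hmax, _⟩ | ⟨hmax, _⟩ <;>
        rw [hmax] <;> rw [Real.norm_eq_abs, sq_abs] <;> nlinarith [sq_nonneg (ρ - ρ'), sq_nonneg (θ - θ')]
    have habs : ρ * (s (ρ, θ) - s (ρ', θ')) -
        ρ' * (fderiv ℝ s (ρ', θ') (1, 0) * (ρ - ρ') +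
          fderiv ℝ s (ρ', θ') (0, 1) * (θ - θ')) =
        (fun x : ℝ × ℝ => x.1 * s x) (ρ, θ) - (fun x : ℝ × ℝ => x.1 * s x) (ρ', θ') -
          (ρ' * ((ρ - ρ') * fderiv ℝ s (ρ', θ') (1, 0) + (θ - θ') * fderiv ℝ s (ρ', θ') (0, 1)) +
            s (ρ', θ') * (ρ - ρ')) := by
      simp only
      ring
    rw [habs]
    calc |(fun x : ℝ × ℝ => x.1 * s x) (ρ, θ) - (fun x : ℝ × ℝ => x.1 * s x) (ρ', θ') -
          (ρ' * ((ρ - ρ') * fderiv ℝ s (ρ', θ') (1, 0) + (θ - θ') * fderiv ℝ s (ρ', θ') (0, 1)) +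
            s (ρ', θ') * (ρ - ρ'))| ≤ M * ‖((ρ, θ) : ℝ × ℝ) - (ρ', θ')‖ ^ 2 := hbound
      _ ≤ M * Q := mul_le_mul_of_nonneg_left hnorm hMpos.le
  -- Step 2 : relEntropy ≥ (m/2) * Q
  have hderiv_val : deriv (fun r : ℝ => ballisticH e s θ' r θ') ρ' =
      e (ρ', θ') - θ' * s (ρ', θ') + P (ρ', θ') / ρ' := (hd_h θ' ρ' hθ'pos hρ'pos).deriv
  -- Part A : θ-direction
  have partA : ballisticH e s θ' ρ θ' + m₁ / 2 * (θ - θ') ^ 2 ≤ ballisticH e s θ' ρ θ := by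
    have := aux_min (fun t => ballisticH e s θ' ρ t - m₁ / 2 * (t - θ') ^ 2)
      (fun t => ρ * fderiv ℝ e (ρ, t) (0, 1) / t * (t - θ') - m₁ * (t - θ'))
      θ₀' θ₁' θ' hθ'mem ?_ ?_ ?_ θ hθmem
    · linarith [this]
    · intro t ht
      have htpos : 0 < t := lt_of_lt_of_le hθ₀ ht.1
      have h1 := hd_g θ' ρ t hθ'pos hρpos htpos
      have h2 : HasDerivAt (fun t' => m₁ / 2 * (t' - θ') ^ 2) (m₁ * (t - θ')) t := by
        have h3 : HasDerivAt (fun t' : ℝ => (t' - θ') ^ 2)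
            ((2 : ℕ) * (t - θ') ^ (2 - 1) * 1) t := ((hasDerivAt_id t).sub_const θ').pow 2
        have h4 := h3.const_mul (m₁ / 2)
        have : m₁ / 2 * ((2 : ℕ) * (t - θ') ^ (2 - 1) * 1) = m₁ * (t - θ') := by
          push_cast; ring
        rwa [this] at h4
      exact h1.sub h2
    · intro t ht hle
      have hK' : ((ρ, t) : ℝ × ℝ) ∈ K := ⟨hρmem, ht⟩
      have := hm₁le (ρ, t) hK'
      show (0:ℝ) ≤ ρ * fderiv ℝ e (ρ, t) (0, 1) / t * (t - θ') - m₁ * (t - θ')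
      have h5 : ρ * fderiv ℝ e (ρ, t) (0, 1) / t * (t - θ') - m₁ * (t - θ') =
          (ρ * fderiv ℝ e (ρ, t) (0, 1) / t - m₁) * (t - θ') := by ring
      rw [h5]
      exact mul_nonneg (by linarith [this]) (by linarith)
    · intro t ht hle
      have hK' : ((ρ, t) : ℝ × ℝ) ∈ K := ⟨hρmem, ht⟩
      have := hm₁le (ρ, t) hK'
      show ρ * fderiv ℝ e (ρ, t) (0, 1) / t * (t - θ') - m₁ * (t - θ') ≤ 0
      have h5 : ρ * fderiv ℝ e (ρ, t) (0, 1) / t * (t - θ') - m₁ * (t - θ') =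
          (ρ * fderiv ℝ e (ρ, t) (0, 1) / t - m₁) * (t - θ') := by ring
      rw [h5]
      exact mul_nonpos_of_nonneg_of_nonpos (by linarith [this]) (by linarith)
  -- monotonicity of φ - m₂ * id
  have hφmono : MonotoneOn (fun r => e (r, θ') - θ' * s (r, θ') + P (r, θ') / r - m₂ * r)
      (Icc ρ₀' ρ₁') := by
    apply monotoneOn_of_deriv_nonneg (convex_Icc _ _)
    · intro r hr
      have hrpos : 0 < r := lt_of_lt_of_le hρ₀ hr.1
      exact ((hd_φ θ' r hθ'pos hrpos).sub ((hasDerivAt_id r).const_mul m₂)).continuousAt.continuousWithinAt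
    · intro r hr
      rw [interior_Icc] at hr
      have hrpos : 0 < r := lt_of_lt_of_le hρ₀ hr.1.le
      exact ((hd_φ θ' r hθ'pos hrpos).sub ((hasDerivAt_id r).const_mul m₂)).differentiableAt.differentiableWithinAt
    · intro r hr
      rw [interior_Icc] at hr
      have hrpos : 0 < r := lt_of_lt_of_le hρ₀ hr.1.le
      have hd : HasDerivAt (fun r => e (r, θ') - θ' * s (r, θ') + P (r, θ') / r - m₂ * r)
          (fderiv ℝ P (r, θ') (1, 0) / r - m₂) r := by
        have h9 := (hd_φ θ' r hθ'pos hrpos).sub ((hasDerivAt_id r).const_mul m₂)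
        simp only [id_eq, mul_one] at h9
        exact h9
      rw [hd.deriv]
      have hK' : ((r, θ') : ℝ × ℝ) ∈ K := ⟨⟨hr.1.le, hr.2.le⟩, hθ'mem⟩
      have h10 := hm₂le (r, θ') hK'
      simp only at h10
      linarith
  -- Part B : ρ-direction
  have partB : ballisticH e s θ' ρ' θ' +
      (e (ρ', θ') - θ' * s (ρ', θ') + P (ρ', θ') / ρ') * (ρ - ρ') + m₂ / 2 * (ρ - ρ') ^ 2 ≤
      ballisticH e s θ' ρ θ' := by
    have := aux_min (fun r => ballisticH e s θ' r θ' -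
        (e (ρ', θ') - θ' * s (ρ', θ') + P (ρ', θ') / ρ') * (r - ρ') - m₂ / 2 * (r - ρ') ^ 2)
      (fun r => (e (r, θ') - θ' * s (r, θ') + P (r, θ') / r) -
        (e (ρ', θ') - θ' * s (ρ', θ') + P (ρ', θ') / ρ') - m₂ * (r - ρ'))
      ρ₀' ρ₁' ρ' hρ'mem ?_ ?_ ?_ ρ hρmem
    · linarith [this]
    · intro r hr
      have hrpos : 0 < r := lt_of_lt_of_le hρ₀ hr.1
      have h1 := hd_h θ' r hθ'pos hrpos
      have h2 : HasDerivAt (fun r' : ℝ =>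
          (e (ρ', θ') - θ' * s (ρ', θ') + P (ρ', θ') / ρ') * (r' - ρ'))
          (e (ρ', θ') - θ' * s (ρ', θ') + P (ρ', θ') / ρ') r := by
        have := ((hasDerivAt_id r).sub_const ρ').const_mul
          (e (ρ', θ') - θ' * s (ρ', θ') + P (ρ', θ') / ρ')
        simpa using this
      have h3 : HasDerivAt (fun r' : ℝ => m₂ / 2 * (r' - ρ') ^ 2) (m₂ * (r - ρ')) r := by
        have h4 : HasDerivAt (fun r' : ℝ => (r' - ρ') ^ 2)
            ((2 : ℕ) * (r - ρ') ^ (2 - 1) * 1) r := ((hasDerivAt_id r).sub_const ρ').pow 2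
        have h5 := h4.const_mul (m₂ / 2)
        have : m₂ / 2 * ((2 : ℕ) * (r - ρ') ^ (2 - 1) * 1) = m₂ * (r - ρ') := by
          push_cast; ring
        rwa [this] at h5
      exact (h1.sub h2).sub h3
    · intro r hr hle
      have h6 := hφmono hρ'mem hr hle
      simp only at h6
      show (0:ℝ) ≤ e (r, θ') - θ' * s (r, θ') + P (r, θ') / r -
        (e (ρ', θ') - θ' * s (ρ', θ') + P (ρ', θ') / ρ') - m₂ * (r - ρ')
      linarith
    · intro r hr hle
      have h6 := hφmono hr hρ'mem hle
      simp only at h6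
      show e (r, θ') - θ' * s (r, θ') + P (r, θ') / r -
        (e (ρ', θ') - θ' * s (ρ', θ') + P (ρ', θ') / ρ') - m₂ * (r - ρ') ≤ 0
      linarith
  have step2 : m / 2 * Q ≤ relEntropy e s ρ θ ρ' θ' := by
    have hm1 : m ≤ m₁ := min_le_left _ _
    have hm2 : m ≤ m₂ := min_le_right _ _
    have hA' : m * (θ - θ') ^ 2 ≤ m₁ * (θ - θ') ^ 2 :=
      mul_le_mul_of_nonneg_right hm1 (sq_nonneg _)
    have hB' : m * (ρ - ρ') ^ 2 ≤ m₂ * (ρ - ρ') ^ 2 :=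
      mul_le_mul_of_nonneg_right hm2 (sq_nonneg _)
    rw [hQdef]
    have e1 : relEntropy e s ρ θ ρ' θ' = ballisticH e s θ' ρ θ -
        deriv (fun r : ℝ => ballisticH e s θ' r θ') ρ' * (ρ - ρ') -
        ballisticH e s θ' ρ' θ' := rfl
    rw [e1, hderiv_val]
    linarith [partA, partB, hA', hB']
  -- conclusion
  have hQnonneg : 0 ≤ Q := by positivity
  have hfinal : M * Q ≤ 2 * M / m * relEntropy e s ρ θ ρ' θ' := by
    have h7 : 2 * M / m * (m / 2 * Q) = M * Q := by field_simp
    calc M * Q = 2 * M / m * (m / 2 * Q) := h7.symm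
      _ ≤ 2 * M / m * relEntropy e s ρ θ ρ' θ' :=
        mul_le_mul_of_nonneg_left step2 (by positivity)
  exact le_trans step1 hfinal
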